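/- Let q be a prime power, let F_q be a finite field with q elements, and let n, k, δ, α be positive integers with 1 ≤ k < n, 1 ≤ δ ≤ n − k, and α ≥ 2. Then B_q(n,k,δ;α) = A_q(n, n−k, n−k−δ+1; α−1), i.e., the maximum cardinality of an α-(n,k,δ)^c_q covering Grassmannian code equals the maximum cardinality of an (n−k−δ+1)-(n, n−k, α−1)^m_q multiple Grassmannian code. -/

import Mathlib

open scoped Classical

/-- `C` is an `a`-`(n,k,d)^c_q` covering Grassmannian code: a set of
`k`-dimensional subspaces of `F^n` such that every `a` distinct codewords
span a subspace of dimension at least `d + k`. -/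
def IsCoveringCode (F : Type*) [Field F] (n k d a : ℕ)
    (C : Finset (Submodule F (Fin n → F))) : Prop :=
  (∀ V ∈ C, Module.finrank F V = k) ∧
  ∀ S ⊆ C, S.card = a → d + k ≤ Module.finrank F ↥(S.sup id)

/-- `Bq F n k d a` is the maximum cardinality of an `a`-`(n,k,d)^c_q`
covering Grassmannian code (no repeated codewords). -/
noncomputable def Bq (F : Type*) [Field F] (n k d a : ℕ) : ℕ :=
  sSup {m | ∃ C : Finset (Submodule F (Fin n → F)), IsCoveringCode F n k d a C ∧ C.card = m}

/-- `C` is a `t`-`(n,k,l)^m_q` multiple Grassmannian code: a set of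
`k`-dimensional subspaces of `F^n` such that every `t`-dimensional subspace
of `F^n` is contained in at most `l` codewords. -/
def IsMultipleCode (F : Type*) [Field F] (n k t l : ℕ)
    (C : Finset (Submodule F (Fin n → F))) : Prop :=
  (∀ V ∈ C, Module.finrank F V = k) ∧
  ∀ T : Submodule F (Fin n → F), Module.finrank F T = t →
    (C.filter fun V => T ≤ V).card ≤ l

/-- `Aq F n k t l` is the maximum cardinality of a `t`-`(n,k,l)^m_q`
multiple Grassmannian code (no repeated codewords). -/
noncomputable def Aq (F : Type*) [Field F] (n k t l : ℕ) : ℕ :=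
  sSup {m | ∃ C : Finset (Submodule F (Fin n → F)), IsMultipleCode F n k t l C ∧ C.card = m}



open Module LinearMap Matrix

section Aux

variable {F : Type} [Field F] {n : ℕ}

noncomputable def theB (F : Type) [Field F] (n : ℕ) : LinearMap.BilinForm F (Fin n → F) :=
  Matrix.toLinearMap₂' F (1 : Matrix (Fin n) (Fin n) F)

lemma theB_apply (x y : Fin n → F) : theB F n x y = x ⬝ᵥ y := by
  rw [theB, Matrix.toLinearMap₂'_apply', Matrix.one_mulVec]

lemma theB_refl : (theB F n).IsRefl := by
  intro x y h
  rw [theB_apply] at h ⊢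
  rwa [dotProduct_comm]

lemma theB_nondeg : (theB F n).Nondegenerate := by
  constructor
  · intro x hx
    funext i
    have := hx (Pi.single i 1)
    rw [theB_apply, dotProduct_single, mul_one] at this
    simpa using this
  · intro x hx
    funext i
    have := hx (Pi.single i 1)
    rw [theB_apply, single_dotProduct, one_mul] at this
    simpa using this

/-- orthogonal complement w.r.t. the dot product form -/
noncomputable def perp (F : Type) [Field F] (n : ℕ)
    (W : Submodule F (Fin n → F)) : Submodule F (Fin n → F) :=
  (theB F n).orthogonal W

lemma perp_perp (W : Submodule F (Fin n → F)) : perp F n (perp F n W) = W :=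
  LinearMap.BilinForm.orthogonal_orthogonal theB_nondeg theB_refl W

lemma perp_injective : Function.Injective (perp F n) := by
  intro U V h
  have := congrArg (perp F n) h
  rwa [perp_perp, perp_perp] at this

lemma finrank_perp (W : Submodule F (Fin n → F)) :
    finrank F (perp F n W) = n - finrank F W := by
  rw [perp, LinearMap.BilinForm.finrank_orthogonal theB_nondeg, finrank_fin_fun]

lemma le_perp_iff {T W : Submodule F (Fin n → F)} :
    T ≤ perp F n W ↔ W ≤ perp F n T := by
  constructor <;> intro h x hx y hy
  · exact theB_refl _ _ (h hy x hx)
  · exact theB_refl _ _ (h hy x hx)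

lemma exists_sub_of_finrank (U : Submodule F (Fin n → F)) (t : ℕ) (ht : t ≤ finrank F U) :
    ∃ T : Submodule F (Fin n → F), T ≤ U ∧ finrank F T = t := by
  have : FiniteDimensional F U := inferInstance
  let b := finBasis F U
  have hle : t ≤ finrank F U := ht
  let f : Fin t → (Fin n → F) := fun i => (b (Fin.castLE hle i) : Fin n → F)
  have hli : LinearIndependent F f := by
    have h1 : LinearIndependent F (fun i : Fin t => b (Fin.castLE hle i)) :=
      b.linearIndependent.comp _ (Fin.castLE_injective hle)
    exact h1.map' U.subtype U.ker_subtype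
  refine ⟨Submodule.span F (Set.range f), ?_, ?_⟩
  · rw [Submodule.span_le]
    rintro - ⟨i, rfl⟩
    exact (b (Fin.castLE hle i)).2
  · rw [finrank_span_eq_card hli, Fintype.card_fin]

end Aux


lemma covering_to_multiple {F : Type} [Field F] {n k d a : ℕ}
    (hkd : k + d ≤ n) (hd : 1 ≤ d)
    {C : Finset (Submodule F (Fin n → F))} (hC : IsCoveringCode F n k d a C) :
    IsMultipleCode F n (n - k) (n - k - d + 1) (a - 1) (C.image (perp F n)) := by
  constructor
  · rintro V hV
    rw [Finset.mem_image] at hV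
    obtain ⟨W, hW, rfl⟩ := hV
    rw [finrank_perp, hC.1 W hW]
  · intro T hT
    by_contra hcon
    push_neg at hcon
    have hfilter : (C.image (perp F n)).filter (fun V => T ≤ V)
        = (C.filter (fun W => T ≤ perp F n W)).image (perp F n) := by
      ext V
      simp only [Finset.mem_filter, Finset.mem_image]
      constructor
      · rintro ⟨⟨W, hW, rfl⟩, h2⟩; exact ⟨W, ⟨hW, h2⟩, rfl⟩
      · rintro ⟨W, ⟨hW, h2⟩, rfl⟩; exact ⟨⟨W, hW, rfl⟩, h2⟩
    rw [hfilter, Finset.card_image_of_injective _ perp_injective] at hcon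
    have ha' : a ≤ (C.filter (fun W => T ≤ perp F n W)).card := by omega
    obtain ⟨S, hS, hScard⟩ := Finset.exists_subset_card_eq ha'
    have hSC : S ⊆ C := hS.trans (Finset.filter_subset _ _)
    have h1 := hC.2 S hSC hScard
    have h2 : S.sup id ≤ perp F n T := by
      apply Finset.sup_le
      intro W hW
      exact le_perp_iff.1 (Finset.mem_filter.1 (hS hW)).2
    have h3 : finrank F ↥(S.sup id) ≤ finrank F ↥(perp F n T) := Submodule.finrank_mono h2
    rw [finrank_perp, hT] at h3
    omega

lemma multiple_to_covering {F : Type} [Field F] {n k d a : ℕ}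
    (hkd : k + d ≤ n) (hk : k ≤ n) (ha : 1 ≤ a)
    {D : Finset (Submodule F (Fin n → F))}
    (hD : IsMultipleCode F n (n - k) (n - k - d + 1) (a - 1) D) :
    IsCoveringCode F n k d a (D.image (perp F n)) := by
  constructor
  · rintro V hV
    rw [Finset.mem_image] at hV
    obtain ⟨W, hW, rfl⟩ := hV
    rw [finrank_perp, hD.1 W hW]
    omega
  · intro S hS hScard
    by_contra hcon
    push_neg at hcon
    have hrank : n - k - d + 1 ≤ finrank F ↥(perp F n (S.sup id)) := by
      rw [finrank_perp]
      have : finrank F ↥(S.sup id) ≤ n := by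
        simpa using Submodule.finrank_le (S.sup id)
      omega
    obtain ⟨T, hTle, hTrank⟩ := exists_sub_of_finrank _ _ hrank
    have key : D.filter (fun V => perp F n V ∈ S) ⊆ D.filter (fun V => T ≤ V) := by
      intro V hV
      rw [Finset.mem_filter] at hV ⊢
      refine ⟨hV.1, ?_⟩
      have h1 : perp F n V ≤ S.sup id := Finset.le_sup (f := id) hV.2
      have h2 : perp F n (S.sup id) ≤ perp F n (perp F n V) :=
        LinearMap.BilinForm.orthogonal_le h1
      rw [perp_perp] at h2
      exact hTle.trans h2
    have hcard : S.card ≤ (D.filter (fun V => perp F n V ∈ S)).card := by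
      have himg : S ⊆ (D.filter (fun V => perp F n V ∈ S)).image (perp F n) := by
        intro W hW
        obtain ⟨V, hV, rfl⟩ := Finset.mem_image.1 (hS hW)
        exact Finset.mem_image.2 ⟨V, Finset.mem_filter.2 ⟨hV, hW⟩, rfl⟩
      calc S.card ≤ _ := Finset.card_le_card himg
        _ = _ := Finset.card_image_of_injective _ perp_injective
    have hD2 := hD.2 T hTrank
    have hkey := Finset.card_le_card key
    omega

/-- `B_q(n,k,d;a) = A_q(n, n-k, n-k-d+1; a-1)`: the maximum cardinality of an
`a`-`(n,k,d)^c_q` covering Grassmannian code equals the maximum cardinality of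
an `(n-k-d+1)`-`(n, n-k, a-1)^m_q` multiple Grassmannian code. -/
theorem stmt5 (q : ℕ) (hq : IsPrimePow q) (F : Type) [Field F] [Fintype F]
    (hF : Fintype.card F = q) (n k d a : ℕ)
    (hk : 1 ≤ k) (hkn : k < n) (hd : 1 ≤ d) (hdn : d ≤ n - k) (ha : 2 ≤ a) :
    Bq F n k d a = Aq F n (n - k) (n - k - d + 1) (a - 1) := by
  have hkd : k + d ≤ n := by omega
  unfold Bq Aq
  congr 1
  ext m
  simp only [Set.mem_setOf_eq]
  constructor
  · rintro ⟨C, hC, rfl⟩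
    exact ⟨C.image (perp F n), covering_to_multiple hkd hd hC,
      Finset.card_image_of_injective _ perp_injective⟩
  · rintro ⟨D, hD, rfl⟩
    exact ⟨D.image (perp F n), multiple_to_covering hkd hkn.le (by omega) hD,
      Finset.card_image_of_injective _ perp_injective⟩
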